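/- Let G be a finite simple graph on [n] = {1,…,n} with at least one edge, such that the ordering 1,2,…,n is a perfect elimination order of the complement G^c. Then listing the minimal monomial generators of the edge ideal I(G) in decreasing lexicographic order induced by x_1 > ⋯ > x_n yields an admissible order, and for every edge {i,j} ∈ E(G) with i < j, the set set(x_i x_j) = { k ∈ [n] : x_k ∈ (u ∈ G(I(G)) : u >_lex x_i x_j) : x_i x_j } equals {1,…,i−1} ∪ ({i+1,…,j−1} ∩ N_G(i)). -/

import Mathlib

open MvPolynomial

/-- An ideal of `K[x_1,…,x_n]` is *generated by variables* if it is the span of the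
image of a subset of the variables. -/
def genByVars {K : Type*} [Field K] {n : ℕ} (I : Ideal (MvPolynomial (Fin n) K)) : Prop :=
  ∃ T : Set (Fin n), I = Ideal.span (MvPolynomial.X '' T)
/-- The natural ordering `1, 2, …, n` of the vertices is a perfect elimination order of
`H`: for each vertex, its neighbourhood among the later vertices is a clique. -/
def natPEO {n : ℕ} (H : SimpleGraph (Fin n)) : Prop :=
  ∀ i j k : Fin n, i < j → i < k → j ≠ k → H.Adj i j → H.Adj i k → H.Adj j k

/-- The reversed ordering `n, n-1, …, 1` of the vertices is a perfect elimination order of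
`H`: for each vertex, its neighbourhood among the earlier-labelled vertices is a clique. -/
def revPEO {n : ℕ} (H : SimpleGraph (Fin n)) : Prop :=
  ∀ i j k : Fin n, j < i → k < i → j ≠ k → H.Adj i j → H.Adj i k → H.Adj j k
/-- The set of minimal monomial generators of the edge ideal `I(G)` that are strictly
greater than `x_i x_j` (where `i < j`) in the lexicographic order induced by
`x_1 > x_2 > ⋯ > x_n`:  these are the monomials `x_a x_b` with `{a,b} ∈ E(G)`, `a < b`,
and `a < i`, or `a = i` and `b < j`. -/
def lexEarlierEdgeGens (K : Type*) [Field K] {n : ℕ} (G : SimpleGraph (Fin n))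
    (i j : Fin n) : Set (MvPolynomial (Fin n) K) :=
  {w | ∃ a b : Fin n, a < b ∧ G.Adj a b ∧ (a < i ∨ (a = i ∧ b < j)) ∧
    w = MvPolynomial.X a * MvPolynomial.X b}

open Finsupp in
theorem aux_supp {K : Type*} [Field K] {n : ℕ} (f : MvPolynomial (Fin n) K) (i j : Fin n)
    (m : Fin n →₀ ℕ) :
    m ∈ (f * (X i * X j)).support ↔
      ∃ m' ∈ f.support, m = m' + (single i 1 + single j 1) := by
  rw [← mul_assoc, support_mul_X, support_mul_X]
  simp only [Finset.mem_map, addRightEmbedding_apply, MvPolynomial.mem_support_iff]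
  constructor
  · rintro ⟨a, ⟨m', h1, rfl⟩, rfl⟩
    exact ⟨m', h1, (add_assoc _ _ _)⟩
  · rintro ⟨m', h1, rfl⟩
    refine ⟨m' + single i 1, ⟨m', h1, rfl⟩, ?_⟩
    rw [add_assoc]

open Finsupp in
theorem aux_key {K : Type*} [Field K] {n : ℕ} (G : SimpleGraph (Fin n))
    (hPEO : natPEO Gᶜ) (i j : Fin n) (hij : i < j) (hadj : G.Adj i j) :
    (Ideal.span (lexEarlierEdgeGens K G i j)).colon
        (Ideal.span {MvPolynomial.X i * MvPolynomial.X j} : Ideal (MvPolynomial (Fin n) K)) =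
      Ideal.span (MvPolynomial.X ''
        {k : Fin n | k < i ∨ (i < k ∧ k < j ∧ G.Adj i k)}) := by
  have hgen : lexEarlierEdgeGens K G i j = (fun d => monomial d (1 : K)) ''
      {d : Fin n →₀ ℕ | ∃ a b : Fin n, a < b ∧ G.Adj a b ∧ (a < i ∨ (a = i ∧ b < j)) ∧
        d = single a 1 + single b 1} := by
    ext w
    constructor
    · rintro ⟨a, b, h1, h2, h3, rfl⟩
      exact ⟨single a 1 + single b 1, ⟨a, b, h1, h2, h3, rfl⟩, by
        rw [X, X, monomial_mul, one_mul]⟩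
    · rintro ⟨d, ⟨a, b, h1, h2, h3, rfl⟩, rfl⟩
      exact ⟨a, b, h1, h2, h3, by rw [X, X, monomial_mul, one_mul]⟩
  ext f
  rw [Ideal.mem_colon_span_singleton, hgen, mem_ideal_span_monomial_image, mem_ideal_span_X_image]
  constructor
  · intro h m hm
    obtain ⟨d, ⟨a, b, hab, hadjab, hcond, rfl⟩, hle⟩ :=
      h (m + (single i 1 + single j 1)) ((aux_supp f i j _).2 ⟨m, hm, rfl⟩)
    have hle' := Finsupp.le_def.1 hle
    rcases hcond with hlt | ⟨rfl, hbj⟩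
    · refine ⟨a, Or.inl hlt, ?_⟩
      have := hle' a
      have hai : a ≠ i := hlt.ne
      have haj : a ≠ j := (hlt.trans hij).ne
      simp [single_apply, hab.ne, hab.ne', hai, haj, Ne.symm hai, Ne.symm haj] at this
      omega
    · refine ⟨b, Or.inr ⟨hab, hbj, hadjab⟩, ?_⟩
      have := hle' b
      have hbi : b ≠ a := hab.ne'
      have hbj' : b ≠ j := hbj.ne
      simp [single_apply, hab.ne, hab.ne', hbi, hbj', Ne.symm hbj'] at this
      omega
  · intro h m hm
    rw [aux_supp] at hm
    obtain ⟨m', hm', rfl⟩ := hm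
    obtain ⟨k, hk, hk0⟩ := h m' hm'
    have hsm : single k 1 ≤ m' := Finsupp.single_le_iff.2 (Nat.one_le_iff_ne_zero.2 hk0)
    rcases hk with hki | ⟨hik, hkj, hadjik⟩
    · by_cases hGki : G.Adj k i
      · refine ⟨single k 1 + single i 1, ⟨k, i, hki, hGki, Or.inl hki, rfl⟩, ?_⟩
        exact add_le_add hsm (le_add_right (le_refl _))
      · by_cases hGkj : G.Adj k j
        · refine ⟨single k 1 + single j 1, ⟨k, j, hki.trans hij, hGkj, Or.inl hki, rfl⟩, ?_⟩
          exact add_le_add hsm (le_add_left (le_refl _))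
        · exfalso
          have := hPEO k i j hki (hki.trans hij) hij.ne
            ⟨hki.ne, hGki⟩ ⟨(hki.trans hij).ne, hGkj⟩
          exact this.2 hadj
    · refine ⟨single i 1 + single k 1, ⟨i, k, hik, hadjik, Or.inr ⟨rfl, hkj⟩, rfl⟩, ?_⟩
      have h1 : single i 1 + single k 1 ≤ (single i 1 + single j 1) + m' :=
        add_le_add (le_add_right (le_refl _)) hsm
      exact h1.trans_eq (add_comm _ _)

/-- **Lemma 2.4 (Ficarra–Herzog), together with the linear quotients property.**
Let `G` be a graph on `Fin n` with at least one edge such that the natural order is a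
perfect elimination order of `Gᶜ`.  Then listing the minimal monomial generators of
`I(G)` in decreasing lexicographic order (induced by `x_1 > ⋯ > x_n`) gives an admissible
order, and for every edge `{i,j}` with `i < j`,
`set(x_i x_j) = {1,…,i-1} ∪ ({i+1,…,j-1} ∩ N_G(i))`. -/
theorem edgeIdeal_lex_admissible_and_set_eq
    {K : Type*} [Field K] {n : ℕ} (G : SimpleGraph (Fin n))
    (hedge : ∃ p q : Fin n, G.Adj p q)
    (hPEO : natPEO Gᶜ) :
    ∀ i j : Fin n, i < j → G.Adj i j →
      genByVars ((Ideal.span (lexEarlierEdgeGens K G i j)).colon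
        (Ideal.span {MvPolynomial.X i * MvPolynomial.X j} : Ideal (MvPolynomial (Fin n) K))) ∧
      {k : Fin n | MvPolynomial.X k ∈ (Ideal.span (lexEarlierEdgeGens K G i j)).colon
          (Ideal.span {MvPolynomial.X i * MvPolynomial.X j} : Ideal (MvPolynomial (Fin n) K))} =
        {k : Fin n | k < i} ∪ {k : Fin n | i < k ∧ k < j ∧ G.Adj i k} := by
  intro i j hij hadj
  have hkey := aux_key (K := K) G hPEO i j hij hadj
  refine ⟨⟨_, hkey⟩, ?_⟩
  ext k
  rw [Set.mem_setOf_eq, hkey, mem_ideal_span_X_image]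
  simp only [support_X, Finset.mem_singleton, Set.mem_setOf_eq, Set.mem_union]
  constructor
  · intro h
    obtain ⟨t, ht, ht0⟩ := h _ rfl
    have : t = k := by
      by_contra hne
      simp [Finsupp.single_apply, Ne.symm hne] at ht0
    exact this ▸ ht
  · intro h m hm
    subst hm
    exact ⟨k, h, by simp⟩
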